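/- Any two points p, q ∈ ℂ³ can be connected by a finite chain of entire holomorphic curves admissible for the 1-form x dy + dz; that is, ℂ³ is connected by holomorphic integral curves of the standard holomorphic contact distribution {ker(x dy + dz)}. -/
import Mathlib


/-- The entire curve `(γ₁, γ₂, γ₃) : ℂ → ℂ³` is holomorphic and admissible for the
1-form `x dy + dz`, i.e. `γ₁(t)·γ₂′(t) + γ₃′(t) = 0` for all `t ∈ ℂ`. -/
def EntireAdmissibleContact (γ₁ γ₂ γ₃ : ℂ → ℂ) : Prop :=
  Differentiable ℂ γ₁ ∧ Differentiable ℂ γ₂ ∧ Differentiable ℂ γ₃ ∧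
  ∀ t : ℂ, γ₁ t * deriv γ₂ t + deriv γ₃ t = 0

/-- `q` is reachable from `p` by a chain of `m + 1` entire holomorphic curves
admissible for the contact form `x dy + dz`. -/
def EntireContactChain (m : ℕ) (γ₁ γ₂ γ₃ : Fin (m + 1) → ℂ → ℂ) (p q : ℂ × ℂ × ℂ) : Prop :=
  (∀ i, EntireAdmissibleContact (γ₁ i) (γ₂ i) (γ₃ i)) ∧
  (γ₁ 0 0, γ₂ 0 0, γ₃ 0 0) = p ∧
  (∀ i : Fin m,
    (γ₁ i.castSucc 1, γ₂ i.castSucc 1, γ₃ i.castSucc 1) =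
    (γ₁ i.succ 0, γ₂ i.succ 0, γ₃ i.succ 0)) ∧
  (γ₁ (Fin.last m) 1, γ₂ (Fin.last m) 1, γ₃ (Fin.last m) 1) = q

lemma affine_diff (c d : ℂ) : Differentiable ℂ (fun t : ℂ => c + d * t) := by
  fun_prop

lemma affine_deriv (c d : ℂ) : deriv (fun t : ℂ => c + d * t) = fun _ => d := by
  ext t
  have h : HasDerivAt (fun t : ℂ => c + d * t) d t := by
    simpa using ((hasDerivAt_id t).const_mul d).const_add c
  exact h.deriv

/-- ℂ³ is connected by finite chains of entire holomorphic curves admissible for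
the standard holomorphic contact form `x dy + dz`. -/
theorem C3_connected_by_contact_admissible_curves (p q : ℂ × ℂ × ℂ) :
    ∃ (m : ℕ) (γ₁ γ₂ γ₃ : Fin (m + 1) → ℂ → ℂ), EntireContactChain m γ₁ γ₂ γ₃ p q := by
  obtain ⟨p₁, p₂, p₃⟩ := p
  obtain ⟨q₁, q₂, q₃⟩ := q
  set a : ℂ := p₃ - q₃ with ha
  set c₁ : Fin 5 → ℂ := ![p₁, a, a, 0, 0] with hc₁
  set d₁ : Fin 5 → ℂ := ![a - p₁, 0, -a, 0, q₁] with hd₁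
  set c₂ : Fin 5 → ℂ := ![p₂, p₂, p₂ + 1, p₂ + 1, q₂] with hc₂
  set d₂ : Fin 5 → ℂ := ![0, 1, 0, q₂ - p₂ - 1, 0] with hd₂
  set c₃ : Fin 5 → ℂ := ![p₃, p₃, q₃, q₃, q₃] with hc₃
  set d₃ : Fin 5 → ℂ := ![0, -a, 0, 0, 0] with hd₃
  refine ⟨4, fun i t => c₁ i + d₁ i * t, fun i t => c₂ i + d₂ i * t,
    fun i t => c₃ i + d₃ i * t, ?_, ?_, ?_, ?_⟩
  · intro i
    refine ⟨affine_diff _ _, affine_diff _ _, affine_diff _ _, fun t => ?_⟩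
    simp only [affine_deriv]
    fin_cases i <;>
      simp [hc₁, hd₁, hc₂, hd₂, hc₃, hd₃]
  · show ((_ : ℂ), (_ : ℂ), (_ : ℂ)) = _
    simp [hc₁, hc₂, hc₃, hd₁, hd₂, hd₃]
  · intro i
    fin_cases i <;>
      · show ((_ : ℂ), (_ : ℂ), (_ : ℂ)) = ((_ : ℂ), (_ : ℂ), (_ : ℂ))
        norm_num [hc₁, hd₁, hc₂, hd₂, hc₃, hd₃, ha, Fin.castSucc, Fin.succ,
          Fin.castAdd, Fin.castLE]
  · show ((_ : ℂ), (_ : ℂ), (_ : ℂ)) = _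
    norm_num [hc₁, hd₁, hc₂, hd₂, hc₃, hd₃, ha, Fin.last]
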